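/- Let {Ξ_{n,k}} be an N-dimensional standard triangular array and let {Ξ⁰_{n,k}} be an independent copy of {Ξ_{n,k}} (i.e. an N-STA independent of {Ξ_{n,k}} with the same joint distributions). If {Ξ_{n,k}} is infinitesimal, i.e. for every ε > 0, max_{1 ≤ k ≤ n} P[|Ξ_{n,k}| > ε] → 0 as n → ∞, then L({Ξ_{n,k}}, {Ξ⁰_{n,k}}) = 0, where L({Ξ_{n,k}}, {Ξ⁰_{n,k}}) = sup_{t ∈ ℝ^N} limsup_{n → ∞} Σ_{k=1}^n E[|Ξ_{n,k}|² ; |⟨Ξ⁰_{n,k}, t⟩| > 1]. -/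

import Mathlib

open MeasureTheory ProbabilityTheory Filter Finset
open scoped RealInnerProductSpace


lemma euc_norm_sq {N : ℕ} (x : EuclideanSpace ℝ (Fin N)) :
    ‖x‖ ^ 2 = ∑ l, (x l) ^ 2 := by
  rw [EuclideanSpace.norm_eq, Real.sq_sqrt (by positivity)]
  simp [sq_abs]

lemma euc_abs_le {N : ℕ} (x : EuclideanSpace ℝ (Fin N)) (l : Fin N) :
    |x l| ≤ ‖x‖ := by
  rw [EuclideanSpace.norm_eq, ← Real.sqrt_sq_eq_abs]
  apply Real.sqrt_le_sqrt
  have := Finset.single_le_sum (f := fun i => ‖x i‖ ^ 2) (fun i _ => by positivity)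
    (Finset.mem_univ l)
  simpa [sq_abs] using this


/-- If an `N`-dimensional standard triangular array `{Ξ_{n,k}}` is infinitesimal and
`{Ξ⁰_{n,k}}` is an independent copy of it, then `L({Ξ_{n,k}}, {Ξ⁰_{n,k}}) = 0`. -/
theorem infinitesimal_implies_L_indep_copy_zero
    (N : ℕ)
    {Ω : Type*} [MeasureSpace Ω] [IsProbabilityMeasure (ℙ : Measure Ω)]
    (X X₀ : ℕ → ℕ → Ω → EuclideanSpace ℝ (Fin N))
    (hmeas : ∀ n k, Measurable (X n k))
    (hmeas₀ : ∀ n k, Measurable (X₀ n k))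
    (hL2 : ∀ n k, MemLp (X n k) 2 ℙ)
    (hindep : ∀ n, iIndepFun (fun k : Fin n => X n k) ℙ)
    (hmean : ∀ n k l, ∫ ω, X n k ω l = 0)
    (hcov : ∀ n, 1 ≤ n → ∀ l m : Fin N,
      ∫ ω, (∑ k ∈ Finset.range n, X n k ω l) * (∑ k ∈ Finset.range n, X n k ω m) =
        if l = m then 1 else 0)
    -- `{X₀}` has the same joint distributions as `{X}` (hence it is also an `N`-STA) ...
    (hcopy : Measure.map (fun ω (p : ℕ × ℕ) => X p.1 p.2 ω) ℙ =
             Measure.map (fun ω (p : ℕ × ℕ) => X₀ p.1 p.2 ω) ℙ)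
    -- ... and is independent of `{X}`:
    (hindepcopy : IndepFun (fun ω (p : ℕ × ℕ) => X p.1 p.2 ω)
                           (fun ω (p : ℕ × ℕ) => X₀ p.1 p.2 ω) ℙ)
    -- `{X}` is infinitesimal:
    (hinf : ∀ ε > (0 : ℝ), Tendsto (fun n =>
      ⨆ k ∈ Finset.range n, (ℙ {ω | ε < ‖X n k ω‖}).toReal) atTop (nhds 0)) :
    (⨆ t : EuclideanSpace ℝ (Fin N), limsup (fun n => ∑ k ∈ Finset.range n,
      ∫ ω in {ω | 1 < |(⟪X₀ n k ω, t⟫ : ℝ)|}, ‖X n k ω‖ ^ 2) atTop) = 0 := by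
  classical
  -- measurability of the "big" maps
  have hbig : Measurable (fun ω (p : ℕ × ℕ) => X p.1 p.2 ω) :=
    measurable_pi_iff.mpr fun p => hmeas p.1 p.2
  have hbig₀ : Measurable (fun ω (p : ℕ × ℕ) => X₀ p.1 p.2 ω) :=
    measurable_pi_iff.mpr fun p => hmeas₀ p.1 p.2
  -- equal distributions of individual terms
  have hdist : ∀ n k, Measure.map (X n k) ℙ = Measure.map (X₀ n k) ℙ := by
    intro n k
    have h1 : X n k = (fun f : ℕ × ℕ → EuclideanSpace ℝ (Fin N) => f (n, k)) ∘
        (fun ω (p : ℕ × ℕ) => X p.1 p.2 ω) := rfl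
    have h2 : X₀ n k = (fun f : ℕ × ℕ → EuclideanSpace ℝ (Fin N) => f (n, k)) ∘
        (fun ω (p : ℕ × ℕ) => X₀ p.1 p.2 ω) := rfl
    rw [h1, h2, ← Measure.map_map (measurable_pi_apply _) hbig,
      ← Measure.map_map (measurable_pi_apply _) hbig₀, hcopy]
  -- independence of X n k and X₀ n k
  have hindnk : ∀ n k, IndepFun (X n k) (X₀ n k) ℙ := fun n k =>
    hindepcopy.comp (measurable_pi_apply (n, k)) (measurable_pi_apply (n, k))
  -- coordinates are in L²
  have hL2c : ∀ n k l, MemLp (fun ω => X n k ω l) 2 ℙ := fun n k l =>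
    (hL2 n k).of_le ((EuclideanSpace.proj l).continuous.measurable.comp (hmeas n k)).aestronglyMeasurable
      (Eventually.of_forall fun ω => by
        simpa [Real.norm_eq_abs] using euc_abs_le (X n k ω) l)
  -- integrability of ‖X n k‖²
  have hInt2 : ∀ n k, Integrable (fun ω => ‖X n k ω‖ ^ 2) ℙ := fun n k =>
    (memLp_two_iff_integrable_sq_norm (hL2 n k).1).mp (hL2 n k)
  -- sum of second moments equals N
  have hsum2 : ∀ n, 1 ≤ n → ∑ k ∈ Finset.range n, ∫ ω, ‖X n k ω‖ ^ 2 = N := by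
    intro n hn
    -- integrability of pairwise products
    have hintprod : ∀ l : Fin N, ∀ k ∈ Finset.range n, ∀ k' ∈ Finset.range n,
        Integrable (fun ω => X n k ω l * X n k' ω l) ℙ := by
      intro l k hk k' hk' 
      by_cases hkk : k = k'
      · subst hkk
        simpa [pow_two] using (hL2c n k l).integrable_sq
      · have hind : IndepFun (X n k) (X n k') ℙ := by
          have := (hindep n).indepFun (i := ⟨k, Finset.mem_range.mp hk⟩)
            (j := ⟨k', Finset.mem_range.mp hk'⟩) (by simpa using hkk)
          exact this
        have hind' : IndepFun (fun ω => X n k ω l) (fun ω => X n k' ω l) ℙ :=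
          hind.comp (EuclideanSpace.proj l).continuous.measurable (EuclideanSpace.proj l).continuous.measurable
        exact hind'.integrable_mul ((hL2c n k l).integrable one_le_two)
          ((hL2c n k' l).integrable one_le_two)
    have key : ∀ l : Fin N, ∑ k ∈ Finset.range n, ∫ ω, (X n k ω l) ^ 2 = 1 := by
      intro l
      have hc := hcov n hn l l
      rw [if_pos rfl] at hc
      have hexp : ∫ ω, (∑ k ∈ Finset.range n, X n k ω l) *
          (∑ k ∈ Finset.range n, X n k ω l) =
          ∑ k ∈ Finset.range n, ∑ k' ∈ Finset.range n, ∫ ω, X n k ω l * X n k' ω l := by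
        have : ∀ ω, (∑ k ∈ Finset.range n, X n k ω l) *
            (∑ k ∈ Finset.range n, X n k ω l) =
            ∑ k ∈ Finset.range n, ∑ k' ∈ Finset.range n, X n k ω l * X n k' ω l := by
          intro ω; rw [Finset.sum_mul_sum]
        simp_rw [this]
        rw [integral_finset_sum _ (fun k hk =>
          integrable_finset_sum _ (fun k' hk' => hintprod l k hk k' hk'))]
        exact Finset.sum_congr rfl fun k hk =>
          integral_finset_sum _ (fun k' hk' => hintprod l k hk k' hk')
      rw [hexp] at hc
      have hdiag : ∀ k ∈ Finset.range n,
          ∑ k' ∈ Finset.range n, ∫ ω, X n k ω l * X n k' ω l = ∫ ω, (X n k ω l) ^ 2 := by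
        intro k hk
        rw [Finset.sum_eq_single k]
        · simp [pow_two]
        · intro k' hk' hne
          have hind : IndepFun (X n k) (X n k') ℙ := by
            have := (hindep n).indepFun (i := ⟨k, Finset.mem_range.mp hk⟩)
              (j := ⟨k', Finset.mem_range.mp hk'⟩) (by simpa using (Ne.symm hne))
            exact this
          have hind' : IndepFun (fun ω => X n k ω l) (fun ω => X n k' ω l) ℙ :=
            hind.comp (EuclideanSpace.proj l).continuous.measurable (EuclideanSpace.proj l).continuous.measurable
          have := hind'.integral_fun_mul_eq_mul_integral ((hL2c n k l).integrable one_le_two).1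
            ((hL2c n k' l).integrable one_le_two).1
          calc ∫ ω, X n k ω l * X n k' ω l = (∫ ω, X n k ω l) * ∫ ω, X n k' ω l := this
            _ = 0 := by rw [hmean n k l, hmean n k' l]; ring
        · intro h; exact absurd hk h
      rw [Finset.sum_congr rfl hdiag] at hc
      exact hc
    have hnorm : ∀ k ∈ Finset.range n, ∫ ω, ‖X n k ω‖ ^ 2 =
        ∑ l : Fin N, ∫ ω, (X n k ω l) ^ 2 := by
      intro k _
      have : ∀ ω, ‖X n k ω‖ ^ 2 = ∑ l : Fin N, (X n k ω l) ^ 2 := fun ω =>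
        euc_norm_sq (X n k ω)
      simp_rw [this]
      exact integral_finset_sum _ (fun l _ => (hL2c n k l).integrable_sq)
    rw [Finset.sum_congr rfl hnorm, Finset.sum_comm]
    simp [key]
  -- the limsup is zero for every t
  have hlimsup : ∀ t : EuclideanSpace ℝ (Fin N),
      limsup (fun n => ∑ k ∈ Finset.range n,
        ∫ ω in {ω | 1 < |(⟪X₀ n k ω, t⟫ : ℝ)|}, ‖X n k ω‖ ^ 2) atTop = 0 := by
    intro t
    by_cases ht : t = 0
    · subst ht
      have : ∀ n, ∑ k ∈ Finset.range n,
          ∫ ω in {ω | 1 < |(⟪X₀ n k ω, (0 : EuclideanSpace ℝ (Fin N))⟫ : ℝ)|},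
            ‖X n k ω‖ ^ 2 = 0 := by
        intro n
        apply Finset.sum_eq_zero
        intro k _
        have : {ω | 1 < |(⟪X₀ n k ω, (0 : EuclideanSpace ℝ (Fin N))⟫ : ℝ)|} = ∅ := by
          ext ω; simp
        rw [this]; simp
      simp_rw [this]
      exact limsup_const 0
    · have htn : (0 : ℝ) < ‖t‖ := norm_pos_iff.mpr ht
      set ε : ℝ := 1 / ‖t‖ with hε
      have hεpos : 0 < ε := by positivity
      set B : Set (EuclideanSpace ℝ (Fin N)) := {y | 1 < |(⟪y, t⟫ : ℝ)|} with hB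
      have hBm : MeasurableSet B := by
        have : Measurable fun y : EuclideanSpace ℝ (Fin N) => |(⟪y, t⟫ : ℝ)| :=
          (measurable_id.inner measurable_const).abs
        exact measurableSet_lt measurable_const this
      -- value of each term
      have hterm : ∀ n k, ∫ ω in {ω | 1 < |(⟪X₀ n k ω, t⟫ : ℝ)|}, ‖X n k ω‖ ^ 2 =
          (∫ ω, ‖X n k ω‖ ^ 2) * (ℙ (X₀ n k ⁻¹' B)).toReal := by
        intro n k
        have hA : MeasurableSet (X₀ n k ⁻¹' B) := (hmeas₀ n k) hBm
        have hset : {ω | 1 < |(⟪X₀ n k ω, t⟫ : ℝ)|} = X₀ n k ⁻¹' B := rfl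
        rw [hset, ← integral_indicator hA]
        have hptw : ∀ ω, (X₀ n k ⁻¹' B).indicator (fun ω => ‖X n k ω‖ ^ 2) ω =
            ‖X n k ω‖ ^ 2 * (X₀ n k ⁻¹' B).indicator (fun _ => (1 : ℝ)) ω := by
          intro ω
          by_cases h : ω ∈ X₀ n k ⁻¹' B <;> simp [Set.indicator, h]
        simp_rw [hptw]
        have hindff : IndepFun (fun ω => ‖X n k ω‖ ^ 2)
            (fun ω => (X₀ n k ⁻¹' B).indicator (fun _ => (1 : ℝ)) ω) ℙ := by
          have : (fun ω => (X₀ n k ⁻¹' B).indicator (fun _ => (1 : ℝ)) ω) =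
              (fun y => B.indicator (fun _ => (1 : ℝ)) y) ∘ X₀ n k := by
            funext ω
            by_cases h : ω ∈ X₀ n k ⁻¹' B <;> simp [Set.indicator, h] <;>
              simp [Set.mem_preimage] at h <;> simp [h]
          rw [this]
          exact (hindnk n k).comp (measurable_norm.pow_const 2)
            (measurable_const.indicator hBm)
        have hint1 : Integrable ((X₀ n k ⁻¹' B).indicator (fun _ => (1 : ℝ))) ℙ :=
          (integrable_const (1 : ℝ)).indicator hA
        have := hindff.integral_fun_mul_eq_mul_integral (hInt2 n k).1 hint1.1
        calc ∫ ω, ‖X n k ω‖ ^ 2 * (X₀ n k ⁻¹' B).indicator (fun _ => (1 : ℝ)) ω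
            = (∫ ω, ‖X n k ω‖ ^ 2) *
              ∫ ω, (X₀ n k ⁻¹' B).indicator (fun _ => (1 : ℝ)) ω := this
          _ = (∫ ω, ‖X n k ω‖ ^ 2) * (ℙ (X₀ n k ⁻¹' B)).toReal := by
              rw [integral_indicator_const (1 : ℝ) hA]; simp [Measure.real]
      -- probability bound
      have hprob : ∀ n k, (ℙ (X₀ n k ⁻¹' B)).toReal ≤ (ℙ {ω | ε < ‖X n k ω‖}).toReal := by
        intro n k
        have h1 : ℙ (X₀ n k ⁻¹' B) = ℙ (X n k ⁻¹' B) := by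
          rw [← Measure.map_apply (hmeas₀ n k) hBm, ← Measure.map_apply (hmeas n k) hBm,
            hdist]
        have h2 : X n k ⁻¹' B ⊆ {ω | ε < ‖X n k ω‖} := by
          intro ω hω
          simp only [Set.mem_preimage, hB, Set.mem_setOf_eq] at hω ⊢
          have hle : |(⟪X n k ω, t⟫ : ℝ)| ≤ ‖X n k ω‖ * ‖t‖ := abs_real_inner_le_norm _ _
          have : 1 < ‖X n k ω‖ * ‖t‖ := lt_of_lt_of_le hω hle
          rw [hε, div_lt_iff₀ htn]
          linarith
        rw [h1]
        exact ENNReal.toReal_mono (measure_ne_top _ _) (measure_mono h2)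
      -- supremum bound
      set S : ℕ → ℝ := fun n => ⨆ k ∈ Finset.range n, (ℙ {ω | ε < ‖X n k ω‖}).toReal
        with hS
      have hSle : ∀ n, ∀ k ∈ Finset.range n,
          (ℙ {ω | ε < ‖X n k ω‖}).toReal ≤ S n := by
        intro n k hk
        have hbdd : BddAbove (Set.range fun k =>
            ⨆ _ : k ∈ Finset.range n, (ℙ {ω | ε < ‖X n k ω‖}).toReal) := by
          refine ⟨1, ?_⟩
          rintro x ⟨j, rfl⟩
          dsimp only
          by_cases hj : j ∈ Finset.range n
          · haveI : Nonempty (j ∈ Finset.range n) := ⟨hj⟩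
            rw [ciSup_const]
            exact ENNReal.toReal_le_of_le_ofReal zero_le_one
              (by simpa using prob_le_one)
          · haveI : IsEmpty (j ∈ Finset.range n) := ⟨hj⟩
            rw [Real.iSup_of_isEmpty]
            exact zero_le_one
        have : (ℙ {ω | ε < ‖X n k ω‖}).toReal =
            ⨆ _ : k ∈ Finset.range n, (ℙ {ω | ε < ‖X n k ω‖}).toReal := by
          haveI : Nonempty (k ∈ Finset.range n) := ⟨hk⟩
          rw [ciSup_const]
        rw [this]
        exact le_ciSup hbdd k
      have hSnn : ∀ n, 0 ≤ S n := by
        intro n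
        rcases Nat.eq_zero_or_pos n with h | h
        · subst h; simp [hS]
        · exact le_trans ENNReal.toReal_nonneg (hSle n 0 (Finset.mem_range.mpr h))
      -- squeeze
      have hub : ∀ᶠ n in atTop, (fun n => ∑ k ∈ Finset.range n,
          ∫ ω in {ω | 1 < |(⟪X₀ n k ω, t⟫ : ℝ)|}, ‖X n k ω‖ ^ 2) n ≤ (N : ℝ) * S n := by
        filter_upwards [eventually_ge_atTop 1] with n hn
        calc ∑ k ∈ Finset.range n, ∫ ω in {ω | 1 < |(⟪X₀ n k ω, t⟫ : ℝ)|}, ‖X n k ω‖ ^ 2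
            ≤ ∑ k ∈ Finset.range n, (∫ ω, ‖X n k ω‖ ^ 2) * S n := by
              apply Finset.sum_le_sum
              intro k hk
              rw [hterm n k]
              have hnn : 0 ≤ ∫ ω, ‖X n k ω‖ ^ 2 :=
                integral_nonneg fun ω => by positivity
              exact mul_le_mul_of_nonneg_left
                (le_trans (hprob n k) (hSle n k hk)) hnn
          _ = (∑ k ∈ Finset.range n, ∫ ω, ‖X n k ω‖ ^ 2) * S n := by
              rw [Finset.sum_mul]
          _ = (N : ℝ) * S n := by rw [hsum2 n hn]
      have hlb : ∀ᶠ n in atTop, (0 : ℝ) ≤ (fun n => ∑ k ∈ Finset.range n,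
          ∫ ω in {ω | 1 < |(⟪X₀ n k ω, t⟫ : ℝ)|}, ‖X n k ω‖ ^ 2) n := by
        filter_upwards with n
        apply Finset.sum_nonneg
        intro k _
        apply setIntegral_nonneg
        · exact (hmeas₀ n k) hBm
        · intro ω _; positivity
      have hSten : Tendsto (fun n => (N : ℝ) * S n) atTop (nhds 0) := by
        rw [hS]
        simpa only [mul_zero] using (hinf ε hεpos).const_mul (N : ℝ)
      have htend : Tendsto (fun n => ∑ k ∈ Finset.range n,
          ∫ ω in {ω | 1 < |(⟪X₀ n k ω, t⟫ : ℝ)|}, ‖X n k ω‖ ^ 2) atTop (nhds 0) :=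
        tendsto_of_tendsto_of_tendsto_of_le_of_le' tendsto_const_nhds hSten hlb hub
      exact htend.limsup_eq
  calc (⨆ t : EuclideanSpace ℝ (Fin N), limsup (fun n => ∑ k ∈ Finset.range n,
        ∫ ω in {ω | 1 < |(⟪X₀ n k ω, t⟫ : ℝ)|}, ‖X n k ω‖ ^ 2) atTop)
      = ⨆ _ : EuclideanSpace ℝ (Fin N), (0 : ℝ) := by
        apply iSup_congr
        intro t
        exact hlimsup t
    _ = 0 := ciSup_const
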